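/- Let p be prime, P ∈ ℤ_p[x₁,...,xₙ], and r₀ ∈ ℤ_p^n with thickness decomposition P(r₀ + p·x) = p^t Q(x). Then the multiplicity of the reduction of P mod p at r₀ (the smallest h such that the degree-h homogeneous Taylor component of P at r₀ is nonzero mod p) is at least t, and the degree of the reduction of Q mod p is at most t. -/

import Mathlib

open MvPolynomial

variable {p : ℕ} [Fact p.Prime]

lemma toZMod_eq_zero_iff (x : ℤ_[p]) : PadicInt.toZMod x = 0 ↔ (p : ℤ_[p]) ∣ x := by
  rw [← RingHom.mem_ker, PadicInt.ker_toZMod, PadicInt.maximalIdeal_eq_span_p,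
    Ideal.mem_span_singleton]

lemma bind₁_scale_monomial {R : Type*} [CommRing R] {n : ℕ} (c a : R) (d : Fin n →₀ ℕ) :
    bind₁ (fun i => C c * X i : Fin n → MvPolynomial (Fin n) R) (monomial d a)
      = monomial d (c ^ (d.sum fun _ e => e) * a) := by
  rw [bind₁_monomial]
  simp only [mul_pow, ← C_pow, Finset.prod_mul_distrib, ← map_prod,
    Finset.prod_pow_eq_pow_sum]
  rw [monomial_eq, Finsupp.prod, Finsupp.sum, map_mul]
  ring

lemma coeff_scale {R : Type*} [CommRing R] {n : ℕ} (c : R) (P : MvPolynomial (Fin n) R)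
    (d : Fin n →₀ ℕ) :
    coeff d (bind₁ (fun i => C c * X i : Fin n → MvPolynomial (Fin n) R) P)
      = c ^ (d.sum fun _ e => e) * coeff d P := by
  conv_lhs => rw [P.as_sum, map_sum]
  simp only [bind₁_scale_monomial]
  rw [coeff_sum]
  simp only [coeff_monomial]
  rw [Finset.sum_ite_eq' P.support d (fun v => c ^ (v.sum fun _ e => e) * coeff v P)]
  by_cases h : d ∈ P.support
  · simp [h]
  · simp [h, notMem_support_iff.mp h]

/-- `pShift p m r P` is the polynomial `P(r + pᵐ·x)`. -/
noncomputable def pShift (p : ℕ) [Fact p.Prime] {n : ℕ} (m : ℕ) (r : Fin n → ℤ_[p])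
    (P : MvPolynomial (Fin n) ℤ_[p]) : MvPolynomial (Fin n) ℤ_[p] :=
  bind₁ (fun i => C (r i) + C ((p : ℤ_[p]) ^ m) * X i) P

/-- If `P(r₀ + p·x) = pᵗ Q(x)` with `t` maximal (the thickness), then the multiplicity
of the reduction of `P` mod `p` at `r₀` (the smallest `h` such that the degree-`h`
homogeneous Taylor component of `P` at `r₀` is nonzero mod `p`) is at least `t`, and the
total degree of the reduction of `Q` mod `p` is at most `t`. -/
theorem mult_ge_thickness_and_deg_le (p : ℕ) [Fact p.Prime] {n : ℕ}
    (P Q : MvPolynomial (Fin n) ℤ_[p]) (r₀ : Fin n → ℤ_[p]) (t : ℕ)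
    (hprim : ¬ C (p : ℤ_[p]) ∣ P)
    (hQ : pShift p 1 r₀ P = C ((p : ℤ_[p]) ^ t) * Q)
    (hQmax : ¬ C (p : ℤ_[p]) ∣ Q) :
    t ≤ sInf {h : ℕ | MvPolynomial.map (PadicInt.toZMod)
        (homogeneousComponent h (bind₁ (fun i => C (r₀ i) + X i) P)) ≠ 0} ∧
    (MvPolynomial.map (PadicInt.toZMod) Q).totalDegree ≤ t := by
  have hpne : (p : ℤ_[p]) ≠ 0 := by
    exact_mod_cast Nat.cast_ne_zero.mpr (Fact.out (p := p.Prime)).ne_zero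
  set R := bind₁ (fun i => C (r₀ i) + X i) P with hR
  have hshift : pShift p 1 r₀ P
      = bind₁ (fun i => C ((p : ℤ_[p])) * X i : Fin n → MvPolynomial (Fin n) ℤ_[p]) R := by
    rw [hR, bind₁_bind₁, pShift]
    simp
  have hkey : ∀ d : Fin n →₀ ℕ, (p : ℤ_[p]) ^ t * coeff d Q
      = (p : ℤ_[p]) ^ (d.sum fun _ e => e) * coeff d R := by
    intro d
    have := congrArg (coeff d) hQ
    rw [hshift, coeff_scale, coeff_C_mul] at this
    exact this.symm
  have hA : ∀ d : Fin n →₀ ℕ, (d.sum fun _ e => e) < t → (p : ℤ_[p]) ∣ coeff d R := by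
    intro d hd
    have h1 : (p : ℤ_[p]) ^ (d.sum fun _ e => e) * ((p : ℤ_[p]) ^ (t - (d.sum fun _ e => e)) * coeff d Q)
        = (p : ℤ_[p]) ^ (d.sum fun _ e => e) * coeff d R := by
      rw [← mul_assoc, ← pow_add, Nat.add_sub_cancel' hd.le]
      exact hkey d
    have h2 := mul_left_cancel₀ (pow_ne_zero _ hpne) h1
    rw [← h2]
    exact Dvd.dvd.mul_right (dvd_pow_self _ (Nat.sub_ne_zero_of_lt hd)) _
  have hB : ∀ d : Fin n →₀ ℕ, t < (d.sum fun _ e => e) → (p : ℤ_[p]) ∣ coeff d Q := by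
    intro d hd
    have h1 : (p : ℤ_[p]) ^ t * coeff d Q
        = (p : ℤ_[p]) ^ t * ((p : ℤ_[p]) ^ ((d.sum fun _ e => e) - t) * coeff d R) := by
      rw [← mul_assoc, ← pow_add, Nat.add_sub_cancel' hd.le]
      exact hkey d
    have h2 := mul_left_cancel₀ (pow_ne_zero _ hpne) h1
    rw [h2]
    exact Dvd.dvd.mul_right (dvd_pow_self _ (Nat.sub_ne_zero_of_lt hd)) _
  have hdeg : ∀ d : Fin n →₀ ℕ, d.degree = d.sum fun _ e => e := fun d => by
    simp [Finsupp.degree, Finsupp.sum]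
    rfl
  constructor
  · apply le_csInf
    · by_contra hempty
      rw [Set.not_nonempty_iff_eq_empty] at hempty
      have hall : ∀ h : ℕ, MvPolynomial.map (PadicInt.toZMod) (homogeneousComponent h R) = 0 := by
        intro h
        by_contra hne
        exact (Set.eq_empty_iff_forall_notMem.mp hempty h) hne
      have hdvdR : C (p : ℤ_[p]) ∣ R := by
        rw [C_dvd_iff_dvd_coeff]
        intro d
        have := congrArg (coeff d) (hall (d.sum fun _ e => e))
        rw [coeff_map, coeff_homogeneousComponent, if_pos (hdeg d), coeff_zero] at this
        exact (toZMod_eq_zero_iff _).mp this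
      apply hprim
      have hPR : P = bind₁ (fun i => X i - C (r₀ i) : Fin n → MvPolynomial (Fin n) ℤ_[p]) R := by
        rw [hR, bind₁_bind₁]
        simp
      obtain ⟨R', hR'⟩ := hdvdR
      rw [hPR, hR', map_mul, algHom_C]
      exact Dvd.intro _ rfl
    · intro h hh
      by_contra hlt
      push_neg at hlt
      apply hh
      ext d
      rw [coeff_map, coeff_homogeneousComponent, coeff_zero]
      split
      · next hd =>
        exact (toZMod_eq_zero_iff _).mpr (hA d (by rw [← hdeg d, hd]; exact hlt))
      · exact map_zero _
  · rw [totalDegree]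
    apply Finset.sup_le
    intro d hd
    by_contra hgt
    push_neg at hgt
    rw [mem_support_iff, coeff_map] at hd
    exact hd ((toZMod_eq_zero_iff _).mpr (hB d hgt))
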